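/- arXiv:0909.2088 — 7 statements merged into one kernel-verified Lean document; each statement's English description precedes it below -/
import Mathlib

section
/- In any inversive arithmetical meadow with zero, 0⁻¹ = 0. -/
structure IAMeadowZero (M : Type*) where
  add : M → M → M
  mul : M → M → M
  zero : M
  one : M
  inv : M → M
  add_assoc : ∀ x y z, add (add x y) z = add x (add y z)
  add_comm : ∀ x y, add x y = add y x
  add_zero : ∀ x, add x zero = x
  mul_assoc : ∀ x y z, mul (mul x y) z = mul x (mul y z)
  mul_comm : ∀ x y, mul x y = mul y x
  mul_one : ∀ x, mul x one = x
  mul_add : ∀ x y z, mul x (add y z) = add (mul x y) (mul x z)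
  inv_inv : ∀ x, inv (inv x) = x
  mul_mul_inv : ∀ x, mul x (mul x (inv x)) = x

theorem inv_zero_eq_zero {M : Type*} (A : IAMeadowZero M) :
    A.inv A.zero = A.zero := by
  -- Step 1: 0·0 = 0
  have h1 : A.mul A.zero A.zero = A.zero := by
    have := A.mul_add A.zero A.one A.zero
    rw [A.add_zero, A.mul_one, A.add_comm] at this
    have h := this.symm
    rwa [A.add_zero] at h
  -- Step 2: 0·0⁻¹ = 0
  have h2 : A.mul A.zero (A.inv A.zero) = A.zero := by
    have := A.mul_mul_inv A.zero
    rwa [← A.mul_assoc, h1] at this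
  -- Step 3: apply law at 0⁻¹
  have h3 := A.mul_mul_inv (A.inv A.zero)
  rw [A.inv_inv, A.mul_comm (A.inv A.zero) A.zero, h2,
      A.mul_comm (A.inv A.zero) A.zero, h2] at h3
  exact h3.symm
end

section
/- In any inversive arithmetical meadow with zero, the inverse is multiplicative: (x·y)⁻¹ = x⁻¹·y⁻¹ for all x, y. -/
theorem inv_mul_distrib_zero {M : Type*} (A : IAMeadowZero M) (x y : M) :
    A.inv (A.mul x y) = A.mul (A.inv x) (A.inv y) := by
  haveI : Std.Associative A.mul := ⟨A.mul_assoc⟩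
  haveI : Std.Commutative A.mul := ⟨A.mul_comm⟩
  -- inverse-side law: x⁻¹ x⁻¹ x = x⁻¹
  have h1' : ∀ z, A.mul (A.inv z) (A.mul (A.inv z) z) = A.inv z := by
    intro z
    have := A.mul_mul_inv (A.inv z)
    rwa [A.inv_inv] at this
  set c := A.mul x y with hc
  set a := A.mul (A.inv x) (A.inv y) with ha
  set b := A.inv c with hb
  -- a is a pseudo-inverse of c
  have haca : A.mul a (A.mul c a) = a := by
    calc A.mul a (A.mul c a)
        = A.mul (A.mul (A.inv x) (A.mul (A.inv x) x))
            (A.mul (A.inv y) (A.mul (A.inv y) y)) := by rw [ha, hc]; ac_rfl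
      _ = a := by rw [h1' x, h1' y]
  have hcac : A.mul c (A.mul a c) = c := by
    calc A.mul c (A.mul a c)
        = A.mul (A.mul x (A.mul x (A.inv x)))
            (A.mul y (A.mul y (A.inv y))) := by rw [ha, hc]; ac_rfl
      _ = c := by rw [A.mul_mul_inv x, A.mul_mul_inv y]
  -- b is a pseudo-inverse of c
  have hbcb : A.mul b (A.mul c b) = b := by
    calc A.mul b (A.mul c b) = A.mul (A.inv c) (A.mul (A.inv c) c) := by rw [hb]; ac_rfl
      _ = b := h1' c
  have hcbc : A.mul c (A.mul b c) = c := by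
    calc A.mul c (A.mul b c) = A.mul c (A.mul c (A.inv c)) := by rw [hb]; ac_rfl
      _ = c := A.mul_mul_inv c
  -- idempotents
  have e1 : A.mul (A.mul c a) (A.mul c a) = A.mul c a := by
    calc A.mul (A.mul c a) (A.mul c a) = A.mul c (A.mul a (A.mul c a)) := by ac_rfl
      _ = A.mul c a := by rw [haca]
  have e2 : A.mul (A.mul c b) (A.mul c b) = A.mul c b := by
    calc A.mul (A.mul c b) (A.mul c b) = A.mul c (A.mul b (A.mul c b)) := by ac_rfl
      _ = A.mul c b := by rw [hbcb]
  have hA : a = A.mul b (A.mul c a) := by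
    calc a = A.mul a (A.mul c a) := haca.symm
      _ = A.mul a (A.mul (A.mul c (A.mul b c)) a) := by rw [hcbc]
      _ = A.mul b (A.mul (A.mul c a) (A.mul c a)) := by ac_rfl
      _ = A.mul b (A.mul c a) := by rw [e1]
  have hB : b = A.mul a (A.mul c b) := by
    calc b = A.mul b (A.mul c b) := hbcb.symm
      _ = A.mul b (A.mul (A.mul c (A.mul a c)) b) := by rw [hcac]
      _ = A.mul a (A.mul (A.mul c b) (A.mul c b)) := by ac_rfl
      _ = A.mul a (A.mul c b) := by rw [e2]
  calc A.inv (A.mul x y) = b := rfl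
    _ = A.mul a (A.mul c b) := hB
    _ = A.mul b (A.mul c a) := by ac_rfl
    _ = a := hA.symm
end

section
/- In any inversive arithmetical meadow with zero satisfying (1+x²+y²)·(1+x²+y²)⁻¹ = 1 for all x, y, every numeral n̲ (n ≥ 1) has a multiplicative inverse, i.e. n̲ · n̲⁻¹ = 1. -/
def IAMeadowZero.numeral {M : Type*} (A : IAMeadowZero M) : ℕ → M
  | 0 => A.one
  | 1 => A.one
  | n + 2 => A.add (A.numeral (n + 1)) A.one

namespace IAMeadowZero

variable {M : Type*} (A : IAMeadowZero M)

theorem mul_left_comm' (x y z : M) : A.mul x (A.mul y z) = A.mul y (A.mul x z) := by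
  rw [← A.mul_assoc, A.mul_comm x y, A.mul_assoc]

theorem unit_inv {x z : M} (h : A.mul x z = A.one) : A.mul x (A.inv x) = A.one := by
  have h1 : A.mul x (A.mul x (A.inv x)) = x := A.mul_mul_inv x
  calc A.mul x (A.inv x) = A.mul (A.mul x (A.inv x)) A.one := (A.mul_one _).symm
    _ = A.mul (A.mul x (A.inv x)) (A.mul x z) := by rw [h]
    _ = A.mul (A.mul x (A.mul x (A.inv x))) z := by
        simp only [A.mul_assoc, A.mul_comm, A.mul_left_comm']
    _ = A.mul x z := by rw [h1]
    _ = A.one := h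

theorem mul_unit {x y : M} (hx : A.mul x (A.inv x) = A.one)
    (hy : A.mul y (A.inv y) = A.one) :
    A.mul (A.mul x y) (A.inv (A.mul x y)) = A.one := by
  apply A.unit_inv (z := A.mul (A.inv x) (A.inv y))
  calc A.mul (A.mul x y) (A.mul (A.inv x) (A.inv y))
      = A.mul (A.mul x (A.inv x)) (A.mul y (A.inv y)) := by
        simp only [A.mul_assoc, A.mul_comm, A.mul_left_comm']
    _ = A.one := by rw [hx, hy, A.mul_one]

theorem numeral_succ (n : ℕ) (hn : 1 ≤ n) :
    A.numeral (n + 1) = A.add (A.numeral n) A.one := by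
  match n, hn with
  | (m+1), _ => rfl

theorem numeral_add (a : ℕ) (ha : 1 ≤ a) (b : ℕ) (hb : 1 ≤ b) :
    A.numeral (a + b) = A.add (A.numeral a) (A.numeral b) := by
  induction b, hb using Nat.le_induction with
  | base => rw [A.numeral_succ a ha]; rfl
  | succ b hb ih =>
    rw [show a + (b + 1) = (a + b) + 1 from rfl,
      A.numeral_succ (a + b) (by omega), ih, A.numeral_succ b hb, A.add_assoc]

theorem numeral_mul (a : ℕ) (ha : 1 ≤ a) (b : ℕ) (hb : 1 ≤ b) :
    A.numeral (a * b) = A.mul (A.numeral a) (A.numeral b) := by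
  induction b, hb using Nat.le_induction with
  | base => rw [Nat.mul_one]; exact (A.mul_one _).symm
  | succ b hb ih =>
    rw [Nat.mul_succ, A.numeral_add (a*b) (Nat.mul_pos (by omega) (by omega)) a ha,
      ih, A.numeral_succ b hb, A.mul_add, A.mul_one]

theorem key (k m a b : ℕ) (hk : 1 ≤ k) (hm : 1 ≤ m) (ha : 1 ≤ a) (hb : 1 ≤ b)
    (H : ∀ x y, A.mul (A.add A.one (A.add (A.mul x x) (A.mul y y)))
        (A.inv (A.add A.one (A.add (A.mul x x) (A.mul y y)))) = A.one)
    (heq : k * m = 1 + a * a + b * b) :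
    A.mul (A.numeral k) (A.inv (A.numeral k)) = A.one := by
  have hS : A.numeral (k * m)
      = A.add A.one (A.add (A.mul (A.numeral a) (A.numeral a))
          (A.mul (A.numeral b) (A.numeral b))) := by
    rw [heq, show 1 + a*a + b*b = 1 + (a*a + b*b) by ring,
      A.numeral_add 1 le_rfl (a*a + b*b) (Nat.add_pos_left (Nat.mul_pos ha ha) _),
      A.numeral_add (a*a) (Nat.mul_pos ha ha) (b*b) (Nat.mul_pos hb hb),
      A.numeral_mul a ha a ha, A.numeral_mul b hb b hb]
    rfl
  have hinv : A.mul (A.numeral (k*m)) (A.inv (A.numeral (k*m))) = A.one := by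
    rw [hS]; exact H (A.numeral a) (A.numeral b)
  rw [A.numeral_mul k hk m hm] at hinv
  apply A.unit_inv (z := A.mul (A.numeral m) (A.inv (A.mul (A.numeral k) (A.numeral m))))
  rw [← A.mul_assoc]; exact hinv

theorem prime_rep (p : ℕ) (hp : p.Prime) :
    ∃ m a b : ℕ, 1 ≤ m ∧ 1 ≤ a ∧ 1 ≤ b ∧ p * m = 1 + a * a + b * b := by
  haveI : Fact p.Prime := ⟨hp⟩
  obtain ⟨x, y, hxy⟩ := ZMod.sq_add_sq p (-1)
  set a : ℕ := x.val + p with hadef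
  set b : ℕ := y.val + p with hbdef
  have hcast : ((1 + a * a + b * b : ℕ) : ZMod p) = 0 := by
    rw [hadef, hbdef]
    push_cast
    push_cast [ZMod.natCast_self, ZMod.natCast_val, ZMod.cast_id]
    linear_combination hxy
  have hdvd : p ∣ 1 + a * a + b * b := (ZMod.natCast_eq_zero_iff _ _).mp hcast
  have hpos : 0 < 1 + a * a + b * b := by positivity
  have hp1 := hp.pos
  refine ⟨(1 + a*a + b*b) / p, a, b, ?_, by omega, by omega, ?_⟩
  · exact Nat.div_pos (Nat.le_of_dvd hpos hdvd) hp.pos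
  · exact Nat.mul_div_cancel' hdvd

end IAMeadowZero

theorem numeral_mul_inv {M : Type*} (A : IAMeadowZero M)
    (H : ∀ x y, A.mul (A.add A.one (A.add (A.mul x x) (A.mul y y)))
        (A.inv (A.add A.one (A.add (A.mul x x) (A.mul y y)))) = A.one)
    (n : ℕ) (hn : 1 ≤ n) :
    A.mul (A.numeral n) (A.inv (A.numeral n)) = A.one := by
  revert hn
  induction n using Nat.strong_induction_on with
  | _ n IH =>
    intro hn
    rcases eq_or_lt_of_le hn with h1 | h2
    · -- n = 1 : 1 * 3 = 1 + 1 + 1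
      subst h1
      exact A.key 1 3 1 1 le_rfl (by norm_num) le_rfl le_rfl H (by norm_num)
    · by_cases hp : n.Prime
      · obtain ⟨m, a, b, hm, ha, hb, heq⟩ := IAMeadowZero.prime_rep n hp
        exact A.key n m a b hn hm ha hb H heq
      · obtain ⟨d, hdvd, hd2, hdn⟩ := Nat.exists_dvd_of_not_prime2 h2 hp
        set e := n / d with he
        have hne : n = d * e := (Nat.mul_div_cancel' hdvd).symm
        have hepos : 1 ≤ e := Nat.div_pos (Nat.le_of_dvd (by omega) hdvd) (by omega)
        have helt : e < n := Nat.div_lt_self (by omega) (by omega)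
        have hd := IH d hdn (by omega)
        have heinv := IH e helt hepos
        rw [hne, A.numeral_mul d (by omega) e hepos]
        exact A.mul_unit hd heinv
end

section
/- The non-negative rational numbers, with the usual addition, multiplication, constants 0 and 1, and zero-totalized multiplicative inverse (0⁻¹ = 0), form an inversive arithmetical meadow with zero, and moreover satisfy (1+x²+y²)·(1+x²+y²)⁻¹ = 1 for all x, y. -/
theorem nnrat_iameadow_zero :
    (∀ x y z : ℚ≥0, (x + y) + z = x + (y + z)) ∧
    (∀ x y : ℚ≥0, x + y = y + x) ∧
    (∀ x : ℚ≥0, x + 0 = x) ∧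
    (∀ x y z : ℚ≥0, (x * y) * z = x * (y * z)) ∧
    (∀ x y : ℚ≥0, x * y = y * x) ∧
    (∀ x : ℚ≥0, x * 1 = x) ∧
    (∀ x y z : ℚ≥0, x * (y + z) = x * y + x * z) ∧
    (∀ x : ℚ≥0, (x⁻¹)⁻¹ = x) ∧
    (∀ x : ℚ≥0, x * (x * x⁻¹) = x) ∧
    ((0 : ℚ≥0)⁻¹ = 0) ∧
    (∀ x y : ℚ≥0, (1 + x * x + y * y) * (1 + x * x + y * y)⁻¹ = 1) := by
  refine ⟨fun x y z => add_assoc x y z, fun x y => add_comm x y, fun x => add_zero x,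
    fun x y z => mul_assoc x y z, fun x y => mul_comm x y, fun x => mul_one x,
    fun x y z => mul_add x y z, fun x => inv_inv x, fun x => ?_, inv_zero, fun x y => ?_⟩
  · rcases eq_or_ne x 0 with h | h
    · simp [h]
    · rw [mul_inv_cancel₀ h, mul_one]
  · apply mul_inv_cancel₀
    positivity
end

section
/- In any inversive arithmetical meadow with zero satisfying (x·x⁻¹)·((x+y)·(x+y)⁻¹) = x·x⁻¹ for all x, y, the equation (1+x²+y²)·(1+x²+y²)⁻¹ = 1 holds for all x, y. -/
theorem one_add_sq_inv {M : Type*} (A : IAMeadowZero M)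
    (H : ∀ x y, A.mul (A.mul x (A.inv x)) (A.mul (A.add x y) (A.inv (A.add x y))) =
        A.mul x (A.inv x)) (x y : M) :
    A.mul (A.add A.one (A.add (A.mul x x) (A.mul y y)))
        (A.inv (A.add A.one (A.add (A.mul x x) (A.mul y y)))) = A.one := by
  have one_mul : ∀ t, A.mul A.one t = t := fun t => (A.mul_comm A.one t).trans (A.mul_one t)
  have h1 : A.mul A.one (A.inv A.one) = A.one := by
    have := A.mul_mul_inv A.one
    rwa [one_mul] at this
  have h := H A.one (A.add (A.mul x x) (A.mul y y))
  rwa [h1, one_mul] at h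
end

section
/- For every term t over the signature {1, +, ·, ⁻¹}, there exist terms t₁ and t₂ over the same signature in which ⁻¹ does not occur, such that t = t₁ · t₂⁻¹ is derivable in the equational theory of inversive arithmetical meadows. -/
structure IAMeadow (M : Type*) where
  add : M → M → M
  mul : M → M → M
  one : M
  inv : M → M
  add_assoc : ∀ x y z, add (add x y) z = add x (add y z)
  add_comm : ∀ x y, add x y = add y x
  mul_assoc : ∀ x y z, mul (mul x y) z = mul x (mul y z)
  mul_comm : ∀ x y, mul x y = mul y x
  mul_one : ∀ x, mul x one = x
  mul_add : ∀ x y z, mul x (add y z) = add (mul x y) (mul x z)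
  mul_inv : ∀ x, mul x (inv x) = one

inductive MTerm : Type
  | var : ℕ → MTerm
  | one : MTerm
  | add : MTerm → MTerm → MTerm
  | mul : MTerm → MTerm → MTerm
  | inv : MTerm → MTerm

def MTerm.invFree : MTerm → Prop
  | .var _ => True
  | .one => True
  | .add s t => s.invFree ∧ t.invFree
  | .mul s t => s.invFree ∧ t.invFree
  | .inv _ => False

def MTerm.eval {M : Type*} (A : IAMeadow M) (ρ : ℕ → M) : MTerm → M
  | .var i => ρ i
  | .one => A.one
  | .add s t => A.add (s.eval A ρ) (t.eval A ρ)
  | .mul s t => A.mul (s.eval A ρ) (t.eval A ρ)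
  | .inv t => A.inv (t.eval A ρ)

namespace IAMeadow

variable {M : Type*} (A : IAMeadow M)

lemma one_mul' (x : M) : A.mul A.one x = x := by rw [A.mul_comm, A.mul_one]

lemma inv_unique {x y : M} (h : A.mul x y = A.one) : A.inv x = y := by
  calc A.inv x = A.mul (A.inv x) A.one := (A.mul_one _).symm
    _ = A.mul (A.inv x) (A.mul x y) := by rw [h]
    _ = A.mul (A.mul (A.inv x) x) y := (A.mul_assoc _ _ _).symm
    _ = A.mul A.one y := by rw [A.mul_comm (A.inv x) x, A.mul_inv]
    _ = y := A.one_mul' _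

lemma inv_one : A.inv A.one = A.one := A.inv_unique (A.mul_one _)

lemma inv_inv (x : M) : A.inv (A.inv x) = x :=
  A.inv_unique (by rw [A.mul_comm]; exact A.mul_inv x)

lemma mul_left_comm (x y z : M) :
    A.mul x (A.mul y z) = A.mul y (A.mul x z) := by
  rw [← A.mul_assoc, A.mul_comm x y, A.mul_assoc]

lemma inv_mul (x y : M) : A.inv (A.mul x y) = A.mul (A.inv x) (A.inv y) := by
  apply A.inv_unique
  calc A.mul (A.mul x y) (A.mul (A.inv x) (A.inv y))
      = A.mul x (A.mul y (A.mul (A.inv x) (A.inv y))) := A.mul_assoc _ _ _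
    _ = A.mul x (A.mul (A.inv x) (A.mul y (A.inv y))) := by
        rw [A.mul_left_comm y (A.inv x)]
    _ = A.mul x (A.mul (A.inv x) A.one) := by rw [A.mul_inv]
    _ = A.mul x (A.inv x) := by rw [A.mul_one]
    _ = A.one := A.mul_inv x

lemma mul_inv_cancel_mid (a b d : M) :
    A.mul (A.mul a d) (A.mul b (A.inv d)) = A.mul a b := by
  calc A.mul (A.mul a d) (A.mul b (A.inv d))
      = A.mul a (A.mul d (A.mul b (A.inv d))) := A.mul_assoc _ _ _
    _ = A.mul a (A.mul b (A.mul d (A.inv d))) := by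
        rw [A.mul_left_comm d b]
    _ = A.mul a (A.mul b A.one) := by rw [A.mul_inv]
    _ = A.mul a b := by rw [A.mul_one]

end IAMeadow

theorem term_inv_elimination (t : MTerm) :
    ∃ t₁ t₂ : MTerm, t₁.invFree ∧ t₂.invFree ∧
      ∀ (M : Type) (A : IAMeadow M) (ρ : ℕ → M),
        t.eval A ρ = A.mul (t₁.eval A ρ) (A.inv (t₂.eval A ρ)) := by
  induction t with
  | var i =>
      exact ⟨.var i, .one, trivial, trivial, fun M A ρ => by
        simp [MTerm.eval, A.inv_one, A.mul_one]⟩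
  | one =>
      exact ⟨.one, .one, trivial, trivial, fun M A ρ => by
        simp [MTerm.eval, A.inv_one, A.mul_one]⟩
  | add s t ihs iht =>
      obtain ⟨s₁, s₂, hs₁, hs₂, hs⟩ := ihs
      obtain ⟨t₁, t₂, ht₁, ht₂, ht⟩ := iht
      refine ⟨.add (.mul s₁ t₂) (.mul t₁ s₂), .mul s₂ t₂, ⟨⟨hs₁, ht₂⟩, ⟨ht₁, hs₂⟩⟩,
        ⟨hs₂, ht₂⟩, fun M A ρ => ?_⟩
      simp only [MTerm.eval, hs M A ρ, ht M A ρ]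
      set a := s₁.eval A ρ; set b := s₂.eval A ρ
      set c := t₁.eval A ρ; set d := t₂.eval A ρ
      rw [A.inv_mul, A.mul_comm (A.add (A.mul a d) (A.mul c b)), A.mul_add,
        A.mul_comm _ (A.mul a d), A.mul_comm _ (A.mul c b),
        A.mul_inv_cancel_mid a (A.inv b) d,
        A.mul_comm (A.inv b) (A.inv d), A.mul_inv_cancel_mid c (A.inv d) b]
  | mul s t ihs iht =>
      obtain ⟨s₁, s₂, hs₁, hs₂, hs⟩ := ihs
      obtain ⟨t₁, t₂, ht₁, ht₂, ht⟩ := iht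
      refine ⟨.mul s₁ t₁, .mul s₂ t₂, ⟨hs₁, ht₁⟩, ⟨hs₂, ht₂⟩, fun M A ρ => ?_⟩
      simp only [MTerm.eval, hs M A ρ, ht M A ρ]
      rw [A.inv_mul]
      set a := s₁.eval A ρ; set b := s₂.eval A ρ
      set c := t₁.eval A ρ; set d := t₂.eval A ρ
      calc A.mul (A.mul a (A.inv b)) (A.mul c (A.inv d))
          = A.mul a (A.mul (A.inv b) (A.mul c (A.inv d))) := A.mul_assoc _ _ _
        _ = A.mul a (A.mul c (A.mul (A.inv b) (A.inv d))) := by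
            rw [A.mul_left_comm (A.inv b) c]
        _ = A.mul (A.mul a c) (A.mul (A.inv b) (A.inv d)) := (A.mul_assoc _ _ _).symm
  | inv s ihs =>
      obtain ⟨s₁, s₂, hs₁, hs₂, hs⟩ := ihs
      refine ⟨s₂, s₁, hs₂, hs₁, fun M A ρ => ?_⟩
      simp only [MTerm.eval, hs M A ρ]
      rw [A.inv_mul, A.inv_inv, A.mul_comm]
end

section
/- Every commutative von Neumann regular arithmetical ring with a multiplicative identity can be expanded to an inversive arithmetical meadow, and this expansion is unique: there is exactly one unary operation ⁻¹ on the carrier satisfying (x⁻¹)⁻¹ = x and x·(x·x⁻¹) = x. -/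
structure ASemiring (M : Type*) where
  add : M → M → M
  mul : M → M → M
  one : M
  add_assoc : ∀ x y z, add (add x y) z = add x (add y z)
  add_comm : ∀ x y, add x y = add y x
  mul_assoc : ∀ x y z, mul (mul x y) z = mul x (mul y z)
  mul_comm : ∀ x y, mul x y = mul y x
  mul_one : ∀ x, mul x one = x
  mul_add : ∀ x y z, mul x (add y z) = add (mul x y) (mul x z)

theorem regular_ring_unique_inv {M : Type*} (A : ASemiring M)
    (reg : ∀ x, ∃ y, A.mul x (A.mul x y) = x) :
    ∃! inv : M → M,
      (∀ x, inv (inv x) = x) ∧ (∀ x, A.mul x (A.mul x (inv x)) = x) := by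
  have lc : ∀ a b c, A.mul a (A.mul b c) = A.mul b (A.mul a c) := by
    intro a b c
    rw [← A.mul_assoc, A.mul_comm a b, A.mul_assoc]
  -- uniqueness of group inverses
  have uniq : ∀ x z w, A.mul x (A.mul x z) = x → A.mul z (A.mul z x) = z →
      A.mul x (A.mul x w) = x → A.mul w (A.mul w x) = w → z = w := by
    intro x z w hxz hzx hxw hwx
    have hz : z = A.mul z (A.mul x w) := by
      conv_lhs => rw [← hzx, ← hxw]
      calc A.mul z (A.mul z (A.mul x (A.mul x w)))
          = A.mul (A.mul z (A.mul z x)) (A.mul x w) := by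
            simp only [A.mul_assoc, lc]
        _ = A.mul z (A.mul x w) := by rw [hzx]
    have hw : w = A.mul z (A.mul x w) := by
      conv_lhs => rw [← hwx, ← hxz]
      calc A.mul w (A.mul w (A.mul x (A.mul x z)))
          = A.mul (A.mul w (A.mul w x)) (A.mul x z) := by
            simp only [A.mul_assoc, lc]
        _ = A.mul w (A.mul x z) := by rw [hwx]
        _ = A.mul z (A.mul x w) := by simp only [A.mul_assoc, lc, A.mul_comm]
    rw [hz, ← hw]
  choose f hf using reg
  set g : M → M := fun x => A.mul x (A.mul (f x) (f x)) with hg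
  have h1 : ∀ x, A.mul x (A.mul x (g x)) = x := by
    intro x
    calc A.mul x (A.mul x (A.mul x (A.mul (f x) (f x))))
        = A.mul (A.mul x (A.mul x (f x))) (A.mul x (f x)) := by
          simp only [A.mul_assoc, lc]
      _ = x := by rw [hf]; exact hf x
  have h2 : ∀ x, A.mul (g x) (A.mul (g x) x) = g x := by
    intro x
    calc A.mul (g x) (A.mul (g x) x)
        = A.mul (A.mul x (A.mul x (f x))) (A.mul x (A.mul (f x) (A.mul (f x) (f x)))) := by
          simp only [hg, A.mul_assoc, lc, A.mul_comm]
      _ = A.mul x (A.mul x (A.mul (f x) (A.mul (f x) (f x)))) := by rw [hf]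
      _ = A.mul (A.mul x (A.mul x (f x))) (A.mul (f x) (f x)) := by
          simp only [A.mul_assoc, lc]
      _ = g x := by rw [hf]
  have hinvol : ∀ x, g (g x) = x := by
    intro x
    exact uniq (g x) (g (g x)) x (h1 (g x)) (h2 (g x)) (h2 x) (h1 x)
  refine ⟨g, ⟨hinvol, h1⟩, ?_⟩
  rintro inv' ⟨hi1, hi2⟩
  funext x
  have hix : A.mul (inv' x) (A.mul (inv' x) x) = inv' x := by
    have := hi2 (inv' x)
    rwa [hi1] at this
  exact uniq x (inv' x) (g x) (hi2 x) hix (h1 x) (h2 x)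
end
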